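/- Let D be a division ring equipped with a multiplicative non-archimedean absolute value ‖·‖ (so ‖xy‖ = ‖x‖·‖y‖, ‖x + y‖ ≤ max(‖x‖, ‖y‖), and ‖x‖ = 0 iff x = 0). Let S ⊆ D be a set containing a nonzero element, and let S* ⊆ D be any set with S* \ {0} = {y⁻¹ : y ∈ S, y ≠ 0}. Then there exists a constant C > 0 such that dist(x⁻¹, S*) ≥ C · dist(x, S) / ‖x‖² for all x ∈ D with ‖x‖ ≥ 1. -/

import Mathlib

/-- Let `D` be a division ring with a multiplicative
non-archimedean absolute value.  Let `S ⊆ D` contain a nonzero element and let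
`S*` satisfy `S* \ {0} = {y⁻¹ : y ∈ S, y ≠ 0}`.  Then there is `C > 0` with
`dist(x⁻¹, S*) ≥ C · dist(x, S) / ‖x‖²` for all `‖x‖ ≥ 1`. -/
theorem stmt9 {D : Type*} [NormedDivisionRing D] [IsUltrametricDist D]
    (S Sstar : Set D) (hS : ∃ y ∈ S, y ≠ 0)
    (hSstar : Sstar \ {0} = (fun y : D => y⁻¹) '' (S \ {0})) :
    ∃ C > (0 : ℝ), ∀ x : D, 1 ≤ ‖x‖ →
      C * Metric.infDist x S / ‖x‖ ^ 2 ≤ Metric.infDist x⁻¹ Sstar := by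
  obtain ⟨y₀, hy₀S, hy₀⟩ := hS
  set M : ℝ := max 1 ‖y₀‖ with hMdef
  have hM1 : (1:ℝ) ≤ M := le_max_left _ _
  have hMpos : (0:ℝ) < M := by linarith
  refine ⟨M⁻¹, by positivity, ?_⟩
  intro x hx
  have hxpos : (0:ℝ) < ‖x‖ := by linarith
  have hx0 : x ≠ 0 := fun h => by simp [h] at hxpos
  have hd0 : 0 ≤ Metric.infDist x S := Metric.infDist_nonneg
  have hdle : Metric.infDist x S ≤ M * ‖x‖ := by
    have h1 : Metric.infDist x S ≤ dist x y₀ := Metric.infDist_le_dist_of_mem hy₀S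
    have h3 : ‖x - y₀‖ ≤ max ‖x‖ ‖y₀‖ := by
      simpa [sub_eq_add_neg] using IsUltrametricDist.norm_add_le_max x (-y₀)
    have h4 : max ‖x‖ ‖y₀‖ ≤ M * ‖x‖ := by
      apply max_le
      · nlinarith
      · have : ‖y₀‖ ≤ M := le_max_right _ _
        nlinarith
    rw [dist_eq_norm] at h1
    linarith
  have key : M⁻¹ * Metric.infDist x S / ‖x‖ ^ 2 ≤ ‖x‖⁻¹ := by
    rw [div_le_iff₀ (by positivity)]
    have h1 : ‖x‖⁻¹ * ‖x‖ ^ 2 = ‖x‖ := by field_simp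
    rw [h1, inv_mul_le_iff₀ hMpos]
    exact hdle
  -- lower bound on each point of Sstar
  have main : ∀ z ∈ Sstar, M⁻¹ * Metric.infDist x S / ‖x‖ ^ 2 ≤ dist x⁻¹ z := by
    intro z hz
    rcases eq_or_ne z 0 with rfl | hz0
    · rw [dist_zero_right, norm_inv]
      exact key
    · have hzmem : z ∈ Sstar \ {0} := ⟨hz, hz0⟩
      rw [hSstar] at hzmem
      obtain ⟨y, ⟨hyS, hy0'⟩, rfl⟩ := hzmem
      have hy0 : y ≠ 0 := hy0'
      have hypos : (0:ℝ) < ‖y‖ := norm_pos_iff.mpr hy0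
      have hdist : dist x⁻¹ y⁻¹ = ‖x‖⁻¹ * ‖x - y‖ * ‖y‖⁻¹ := by
        rw [dist_eq_norm, inv_sub_inv' hx0 hy0, norm_mul, norm_mul, norm_inv, norm_inv,
          norm_sub_rev]
      rw [hdist]
      have hdxy : Metric.infDist x S ≤ ‖x - y‖ := by
        have := Metric.infDist_le_dist_of_mem (x := x) hyS
        rwa [dist_eq_norm] at this
      rcases le_or_gt ‖y‖ ‖x‖ with hyx | hyx
      · have h1 : M⁻¹ * Metric.infDist x S / ‖x‖ ^ 2 ≤ Metric.infDist x S / ‖x‖ ^ 2 := by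
          apply div_le_div_of_nonneg_right ?_ (by positivity) |>.trans_eq rfl
          nlinarith [inv_le_one_of_one_le₀ hM1]
        have h2 : Metric.infDist x S / ‖x‖ ^ 2 ≤ ‖x‖⁻¹ * ‖x - y‖ * ‖y‖⁻¹ := by
          have hxi : ‖x‖⁻¹ ≤ ‖y‖⁻¹ := by
            apply inv_anti₀ hypos hyx
          calc Metric.infDist x S / ‖x‖ ^ 2 ≤ ‖x - y‖ / ‖x‖ ^ 2 := by
                apply div_le_div_of_nonneg_right hdxy (by positivity) |>.trans_eq rfl
            _ = ‖x‖⁻¹ * ‖x - y‖ * ‖x‖⁻¹ := by rw [div_eq_mul_inv, sq, mul_inv]; ring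
            _ ≤ ‖x‖⁻¹ * ‖x - y‖ * ‖y‖⁻¹ := by
                apply mul_le_mul_of_nonneg_left hxi (by positivity)
        linarith
      · -- ‖x‖ < ‖y‖, so ‖x - y‖ ≥ ‖y‖
        have hxy : ‖y‖ ≤ ‖x - y‖ := by
          have h := IsUltrametricDist.norm_add_le_max (y - x) x
          simp only [sub_add_cancel] at h
          rcases max_cases ‖y - x‖ ‖x‖ with ⟨heq, _⟩ | ⟨heq, hle⟩
          · rw [heq] at h; rwa [norm_sub_rev]
          · rw [heq] at h; linarith
        have : ‖x‖⁻¹ ≤ ‖x‖⁻¹ * ‖x - y‖ * ‖y‖⁻¹ := by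
          rw [mul_assoc]
          have h2 : (1:ℝ) ≤ ‖x - y‖ * ‖y‖⁻¹ := by
            rw [← div_eq_mul_inv, le_div_iff₀ hypos, one_mul]
            exact hxy
          nlinarith [inv_pos.mpr hxpos]
        linarith [key]
  -- conclude
  by_contra hcon
  push_neg at hcon
  have hne : Sstar.Nonempty := by
    have : y₀⁻¹ ∈ Sstar \ {0} := by
      rw [hSstar]; exact ⟨y₀, ⟨hy₀S, hy₀⟩, rfl⟩
    exact ⟨y₀⁻¹, this.1⟩
  obtain ⟨z, hzS, hzlt⟩ := (Metric.infDist_lt_iff hne).mp hcon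
  exact absurd hzlt (not_lt.mpr (main z hzS))
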